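/- Consider the VNLM. If the initial value satisfies x₀ > k_max·(r/(a·k_min) + 1), then the cumulative pest density h(t) = a·∫₀ᵗ x(s) ds also blows up in finite time: with T* < ∞ denoting the finite blow-up time of the solution x, one has limsup_{t → T*⁻} h(t) = +∞. -/

import Mathlib

open Set Filter MeasureTheory

/-- The variable carrying capacity `k(t) = (k_max − k_min)·(cos(dπt)+1)/2 + k_min`. -/
noncomputable def kcap (kmin kmax d t : ℝ) : ℝ :=
  (kmax - kmin) * ((Real.cos (d * Real.pi * t) + 1) / 2) + kmin

/-- The cumulative density `h(t) = a·∫₀ᵗ x(s) ds`. -/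
noncomputable def hcum (a : ℝ) (x : ℝ → ℝ) (t : ℝ) : ℝ :=
  a * ∫ s in (0:ℝ)..t, x s

/-- `x` is a (C¹) solution of the VNLM on the set `D`:
it is continuous on `D` and satisfies
`x′(t) = (r − h(t))·x(t)·(1 − x(t)/k(t))` for all `t ∈ D`. -/
def IsVNLMSolOn (a r d kmin kmax : ℝ) (x : ℝ → ℝ) (D : Set ℝ) : Prop :=
  ContinuousOn x D ∧
  ∀ t ∈ D, HasDerivWithinAt x
    ((r - hcum a x t) * x t * (1 - x t / kcap kmin kmax d t)) D t

/-- The solution of the VNLM starting from `x₀` blows up in finite time: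
there is no solution on all of `[0, ∞)`, and every maximal solution lives on
an interval `[0, T*)` with `T* < ∞` and `limsup_{t → T*⁻} x(t) = +∞`. -/
def VNLMBlowsUp (a r d kmin kmax x0 : ℝ) : Prop :=
  (¬ ∃ x : ℝ → ℝ, x 0 = x0 ∧ IsVNLMSolOn a r d kmin kmax x (Set.Ici 0)) ∧
  ∀ (Tstar : ℝ) (x : ℝ → ℝ), 0 < Tstar → x 0 = x0 →
    IsVNLMSolOn a r d kmin kmax x (Set.Ico 0 Tstar) →
    (¬ ∃ b : ℝ, Tstar < b ∧ ∃ y : ℝ → ℝ, y 0 = x0 ∧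
        IsVNLMSolOn a r d kmin kmax y (Set.Ico 0 b) ∧
        ∀ t ∈ Set.Ico (0:ℝ) Tstar, y t = x t) →
    Filter.limsup (fun t => (x t : EReal)) (nhdsWithin Tstar (Set.Iio Tstar)) = ⊤

private lemma kcap_ge {kmin kmax d : ℝ} (hk : kmin ≤ kmax) (t : ℝ) :
    kmin ≤ kcap kmin kmax d t := by
  have h1 := Real.neg_one_le_cos (d * Real.pi * t)
  have h2 := Real.cos_le_one (d * Real.pi * t)
  unfold kcap
  nlinarith

private lemma aux_inv_le {u B : ℝ} (hu : 0 < u) (hB : 0 < B) (h : u⁻¹ ≤ B) : B⁻¹ ≤ u := by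
  have h1 : u * u⁻¹ = 1 := mul_inv_cancel₀ hu.ne'
  have h3 : 1 ≤ u * B := by nlinarith
  have h4 := mul_le_mul_of_nonneg_right h3 (inv_pos.2 hB).le
  rwa [one_mul, mul_assoc, mul_inv_cancel₀ hB.ne', mul_one] at h4

private lemma aux_inv_lt {ε u : ℝ} (hε : 0 < ε) (h : ε⁻¹ < u) : u⁻¹ < ε := by
  have hu : 0 < u := lt_trans (inv_pos.2 hε) h
  have h1 : ε * ε⁻¹ = 1 := mul_inv_cancel₀ hε.ne'
  have h3 : 1 < ε * u := by nlinarith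
  have h4 := mul_lt_mul_of_pos_right h3 (inv_pos.2 hu)
  rwa [one_mul, mul_assoc, mul_inv_cancel₀ hu.ne', mul_one] at h4

private lemma gronwallBound_mono_time {δ K ε : ℝ} (hδ : 0 ≤ δ) (hK : 0 < K) (hε : 0 ≤ ε)
    {s t : ℝ} (hst : s ≤ t) : gronwallBound δ K ε s ≤ gronwallBound δ K ε t := by
  simp only [gronwallBound_of_K_ne_0 hK.ne']
  have h1 : Real.exp (K * s) ≤ Real.exp (K * t) := by
    apply Real.exp_le_exp.2
    nlinarith
  have h2 : 0 ≤ ε / K := div_nonneg hε hK.le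
  nlinarith [Real.exp_pos (K * s)]

private lemma vnlm_bound {r M kmin xs ks hs : ℝ} (hrpos : 0 < r) (hM : 0 ≤ M)
    (hx : 0 < xs) (hkmin : 0 < kmin) (hks : kmin ≤ ks)
    (hh0 : 0 ≤ hs) (hhM : hs ≤ M) :
    |(-((r - hs) * xs * (1 - xs / ks)) / xs ^ 2)| ≤ (r + M + 1) * xs⁻¹ + (r + M + 1) / kmin := by
  have hkspos : 0 < ks := lt_of_lt_of_le hkmin hks
  have e1 : -((r - hs) * xs * (1 - xs / ks)) / xs ^ 2 = ((hs - r) * (1 - xs / ks)) * xs⁻¹ := by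
    field_simp
    ring
  rw [e1, abs_mul, abs_mul, abs_inv, abs_of_pos hx]
  have h2 : |hs - r| ≤ r + M + 1 := abs_le.2 ⟨by linarith, by linarith⟩
  have hf1 : 0 ≤ xs / ks := by positivity
  have hf2 : xs / ks ≤ xs / kmin := by gcongr
  have h3 : |1 - xs / ks| ≤ 1 + xs / kmin := abs_le.2 ⟨by linarith, by linarith⟩
  have h4 : |hs - r| * |1 - xs / ks| * xs⁻¹ ≤ ((r + M + 1) * (1 + xs / kmin)) * xs⁻¹ :=
    mul_le_mul_of_nonneg_right
      (mul_le_mul h2 h3 (abs_nonneg _) (by linarith)) (inv_nonneg.2 hx.le)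
  have h5 : ((r + M + 1) * (1 + xs / kmin)) * xs⁻¹ = (r + M + 1) * xs⁻¹ + (r + M + 1) / kmin := by
    field_simp
  linarith

/-- if `x₀ > k_max·(r/(a·k_min) + 1)`, then the cumulative pest
density `h(t) = a·∫₀ᵗ x(s) ds` also blows up in finite time: if `T* < ∞` is the
finite blow-up time of a maximal solution `x` (i.e. `limsup_{t → T*⁻} x(t) = +∞`),
then `limsup_{t → T*⁻} h(t) = +∞`. -/
theorem vnlm_cumulative_blowup (a r d kmin kmax : ℝ)
    (ha : 0 < a) (hr : 0 < r) (hd : 0 < d)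
    (hkmin : 0 < kmin) (hk : kmin ≤ kmax)
    (x0 : ℝ) (hx0 : kmax * (r / (a * kmin) + 1) < x0)
    (Tstar : ℝ) (x : ℝ → ℝ) (hTpos : 0 < Tstar) (hinit : x 0 = x0)
    (hsol : IsVNLMSolOn a r d kmin kmax x (Set.Ico 0 Tstar))
    (hmax : ¬ ∃ b : ℝ, Tstar < b ∧ ∃ y : ℝ → ℝ, y 0 = x0 ∧
        IsVNLMSolOn a r d kmin kmax y (Set.Ico 0 b) ∧
        ∀ t ∈ Set.Ico (0:ℝ) Tstar, y t = x t)
    (hblow : Filter.limsup (fun t => (x t : EReal))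
        (nhdsWithin Tstar (Set.Iio Tstar)) = ⊤) :
    Filter.limsup (fun t => (hcum a x t : EReal))
        (nhdsWithin Tstar (Set.Iio Tstar)) = ⊤ := by
  classical
  by_contra hcon
  obtain ⟨hX, hD⟩ := hsol
  have hx0pos : 0 < x0 := by
    have h1 : 0 < r / (a * kmin) + 1 := by positivity
    nlinarith [lt_of_lt_of_le hkmin hk]
  -- ### Step 1 : a uniform upper bound `M` for `hcum a x` on `[0, Tstar)`.
  obtain ⟨M, hM0, hM⟩ : ∃ M : ℝ, 0 ≤ M ∧ ∀ t ∈ Ico 0 Tstar, hcum a x t ≤ M := by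
    have hLlt : Filter.limsup (fun t => (hcum a x t : EReal))
        (nhdsWithin Tstar (Set.Iio Tstar)) < ⊤ := lt_top_iff_ne_top.2 hcon
    obtain ⟨c, hc1, -⟩ := EReal.lt_iff_exists_real_btwn.1 hLlt
    have hEv : ∀ᶠ t in nhdsWithin Tstar (Set.Iio Tstar),
        (fun t => (hcum a x t : EReal)) t < (c : EReal) :=
      Filter.eventually_lt_of_limsup_lt hc1
    obtain ⟨l, hl, hIoo⟩ := mem_nhdsLT_iff_exists_Ioo_subset.1 hEv
    set σ : ℝ := max l 0 with hσdef
    have hσ0 : (0:ℝ) ≤ σ := le_max_right _ _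
    have hσT : σ < Tstar := max_lt hl hTpos
    have hint : IntegrableOn x (uIcc 0 σ) volume := by
      rw [uIcc_of_le hσ0]
      exact (hX.mono (fun u hu => ⟨hu.1, lt_of_le_of_lt hu.2 hσT⟩)).integrableOn_Icc
    have hHc : ContinuousOn (hcum a x) (uIcc 0 σ) :=
      continuousOn_const.mul (intervalIntegral.continuousOn_primitive_interval hint)
    obtain ⟨C0, hC0⟩ := (isCompact_uIcc).exists_bound_of_continuousOn hHc
    refine ⟨max c (max C0 0), le_trans (le_max_right C0 0) (le_max_right c (max C0 0)), ?_⟩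
    intro t ht
    rcases le_or_gt t σ with h1 | h1
    · have h2 : hcum a x t ≤ C0 :=
        le_trans (le_abs_self _) (hC0 t (by rw [uIcc_of_le hσ0]; exact ⟨ht.1, h1⟩))
      exact le_trans h2 (le_trans (le_max_left C0 0) (le_max_right c (max C0 0)))
    · have htl : t ∈ Ioo l Tstar := ⟨lt_of_le_of_lt (le_max_left l 0) h1, ht.2⟩
      have h2 : hcum a x t < c := by
        have h3 := hIoo htl
        simp only [Set.mem_setOf_eq] at h3
        exact_mod_cast h3
      exact le_trans h2.le (le_max_left _ _)
  set K : ℝ := r + M + 1 with hKdef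
  have hKpos : 0 < K := by positivity
  set B : ℝ := gronwallBound x0⁻¹ K (K / kmin) Tstar with hBdef
  set F : ℝ → ℝ := fun t => (r - hcum a x t) * x t * (1 - x t / kcap kmin kmax d t) with hFdef
  have hDF : ∀ t ∈ Ico 0 Tstar, HasDerivWithinAt x (F t) (Ico 0 Tstar) t := hD
  have hDIci : ∀ t ∈ Ico 0 Tstar, HasDerivWithinAt x (F t) (Ici t) t := by
    intro t ht
    refine (hDF t ht).mono_of_mem_nhdsWithin ?_
    rw [mem_nhdsWithin]
    exact ⟨Iio Tstar, isOpen_Iio, ht.2, fun u hu => ⟨le_trans ht.1 hu.2, hu.1⟩⟩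
  have hDAt : ∀ t ∈ Ioo 0 Tstar, HasDerivAt x (F t) t := by
    intro t ht
    refine (hDF t ⟨ht.1.le, ht.2⟩).hasDerivAt ?_
    exact mem_nhds_iff.2 ⟨Ioo 0 Tstar, fun u hu => ⟨hu.1.le, hu.2⟩, isOpen_Ioo, ht⟩
  have hh0 : ∀ u ∈ Ico 0 Tstar, (∀ v ∈ Icc 0 u, 0 < x v) → 0 ≤ hcum a x u := by
    intro u hu hpos
    have : 0 ≤ ∫ v in (0:ℝ)..u, x v :=
      intervalIntegral.integral_nonneg hu.1 (fun v hv => (hpos v hv).le)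
    exact mul_nonneg ha.le this
  -- ### Step 2 : Grönwall estimate on any interval of positivity.
  have claimA : ∀ t' ∈ Ico 0 Tstar, (∀ s ∈ Icc 0 t', 0 < x s) →
      ∀ s ∈ Icc 0 t', (x s)⁻¹ ≤ B := by
    intro t' ht' hpos s hs
    have hsub : Icc 0 t' ⊆ Ico 0 Tstar := fun u hu => ⟨hu.1, lt_of_le_of_lt hu.2 ht'.2⟩
    have key : ∀ u ∈ Icc 0 t',
        ‖(x u)⁻¹‖ ≤ gronwallBound x0⁻¹ K (K / kmin) (u - 0) := by
      apply norm_le_gronwallBound_of_norm_deriv_right_le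
        (f := fun u => (x u)⁻¹) (f' := fun u => -F u / x u ^ 2)
      · exact ((hX.mono hsub).inv₀ (fun u hu => (hpos u hu).ne'))
      · intro u hu
        exact (hDIci u ⟨hu.1, lt_trans hu.2 ht'.2⟩).inv (hpos u ⟨hu.1, hu.2.le⟩).ne'
      · rw [hinit, Real.norm_eq_abs, abs_of_pos (inv_pos.2 hx0pos)]
      · intro u hu
        have huI : u ∈ Icc 0 t' := ⟨hu.1, hu.2.le⟩
        have hxu : 0 < x u := hpos u huI
        have hh0u : 0 ≤ hcum a x u :=
          hh0 u (hsub huI) (fun v hv => hpos v ⟨hv.1, le_trans hv.2 huI.2⟩)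
        have hhMu : hcum a x u ≤ M := hM u (hsub huI)
        have hb := vnlm_bound (M := M) hr hM0 hxu hkmin (kcap_ge (d := d) hk u) hh0u hhMu
        rw [Real.norm_eq_abs, Real.norm_eq_abs, abs_inv, abs_of_pos hxu]
        calc |(-F u / x u ^ 2)|
            = |(-((r - hcum a x u) * x u * (1 - x u / kcap kmin kmax d u)) / x u ^ 2)| := rfl
          _ ≤ (r + M + 1) * (x u)⁻¹ + (r + M + 1) / kmin := hb
          _ = K * (x u)⁻¹ + K / kmin := by rw [hKdef]
    have h1 := key s hs
    rw [Real.norm_eq_abs, abs_inv, abs_of_pos (hpos s hs)] at h1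
    refine le_trans h1 ?_
    apply gronwallBound_mono_time (inv_pos.2 hx0pos).le hKpos (div_nonneg hKpos.le hkmin.le)
    have : s < Tstar := lt_of_le_of_lt hs.2 ht'.2
    linarith
  have hBpos : 0 < B := by
    have h1 := claimA 0 ⟨le_refl 0, hTpos⟩
      (fun s hs => by
        have hs0 : s = 0 := le_antisymm (by simpa using hs.2) hs.1
        rw [hs0, hinit]; exact hx0pos) 0 ⟨le_refl 0, le_refl 0⟩
    rw [hinit] at h1
    exact lt_of_lt_of_le (inv_pos.2 hx0pos) h1
  -- ### Step 3 : positivity of `x` on `[0, Tstar)`.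
  have hxpos : ∀ t ∈ Ico 0 Tstar, 0 < x t := by
    by_contra hcon2
    push_neg at hcon2
    obtain ⟨z, hz, hxz⟩ := hcon2
    set Z : Set ℝ := {t | t ∈ Ico 0 Tstar ∧ x t ≤ 0} with hZdef
    have hZne : Z.Nonempty := ⟨z, hz, hxz⟩
    have hZbdd : BddBelow Z := ⟨0, fun u hu => hu.1.1⟩
    set t₁ : ℝ := sInf Z with ht₁def
    have ht₁0 : 0 ≤ t₁ := le_csInf hZne fun u hu => hu.1.1
    have ht₁lt : t₁ < Tstar := lt_of_le_of_lt (csInf_le hZbdd ⟨hz, hxz⟩) hz.2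
    have hbefore : ∀ s, 0 ≤ s → s < t₁ → 0 < x s := by
      intro s hs0 hst
      by_contra hxs
      push_neg at hxs
      exact absurd (csInf_le hZbdd ⟨⟨hs0, lt_trans hst ht₁lt⟩, hxs⟩) (not_le.2 hst)
    have hxt₁ : x t₁ ≤ 0 := by
      obtain ⟨u, hu, hulim⟩ := mem_closure_iff_seq_limit.1 (csInf_mem_closure hZne hZbdd)
      have htend : Filter.Tendsto (fun n => x (u n)) atTop (nhds (x t₁)) := by
        refine ((hX t₁ ⟨ht₁0, ht₁lt⟩).tendsto).comp ?_
        exact tendsto_nhdsWithin_iff.2 ⟨hulim, Filter.Eventually.of_forall fun n => (hu n).1⟩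
      exact le_of_tendsto htend (Filter.Eventually.of_forall fun n => (hu n).2)
    have ht₁pos : 0 < t₁ := by
      rcases lt_or_eq_of_le ht₁0 with h | h
      · exact h
      · exfalso
        rw [← h, hinit] at hxt₁
        linarith
    have hge : ∀ s, 0 ≤ s → s < t₁ → B⁻¹ ≤ x s := by
      intro s hs0 hst
      have hposOn : ∀ u ∈ Icc 0 s, 0 < x u :=
        fun u hu => hbefore u hu.1 (lt_of_le_of_lt hu.2 hst)
      have h1 := claimA s ⟨hs0, lt_trans hst ht₁lt⟩ hposOn s ⟨hs0, le_refl s⟩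
      exact aux_inv_le (hposOn s ⟨hs0, le_refl s⟩) hBpos h1
    have hne : (nhdsWithin t₁ (Ico 0 t₁)).NeBot := by
      apply mem_closure_iff_nhdsWithin_neBot.1
      rw [closure_Ico (ne_of_lt ht₁pos)]
      exact ⟨ht₁0, le_refl t₁⟩
    have htend : Filter.Tendsto x (nhdsWithin t₁ (Ico 0 t₁)) (nhds (x t₁)) :=
      ((hX t₁ ⟨ht₁0, ht₁lt⟩).mono fun u hu => ⟨hu.1, lt_trans hu.2 ht₁lt⟩).tendsto
    have hfin : B⁻¹ ≤ x t₁ :=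
      ge_of_tendsto htend (eventually_nhdsWithin_of_forall fun u hu => hge u hu.1 hu.2)
    have := inv_pos.2 hBpos
    linarith
  have hinvB : ∀ t ∈ Ico 0 Tstar, (x t)⁻¹ ≤ B := fun t ht =>
    claimA t ht (fun s hs => hxpos s ⟨hs.1, lt_of_le_of_lt hs.2 ht.2⟩) t ⟨ht.1, le_refl t⟩
  -- ### Step 4 : `1/x(s) ≤ 1/x(t) + C (t-s)`.
  set C : ℝ := K * (B + kmin⁻¹) with hCdef
  have hCpos : 0 < C := by positivity
  have claimD : ∀ s t : ℝ, 0 ≤ s → s ≤ t → t < Tstar →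
      (x s)⁻¹ ≤ (x t)⁻¹ + C * (t - s) := by
    intro s t hs0 hst htT
    set φ : ℝ → ℝ := fun u => -(x u)⁻¹ - C * u with hφdef
    have hsub : Icc s t ⊆ Ico 0 Tstar :=
      fun u hu => ⟨le_trans hs0 hu.1, lt_of_le_of_lt hu.2 htT⟩
    have hφderiv : ∀ u ∈ Ioo s t, HasDerivAt φ (F u / x u ^ 2 - C) u := by
      intro u hu
      have huI : u ∈ Ioo 0 Tstar := ⟨lt_of_le_of_lt hs0 hu.1, lt_trans hu.2 htT⟩
      have hxu : 0 < x u := hxpos u ⟨huI.1.le, huI.2⟩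
      have h1 : HasDerivAt (fun y => (x y)⁻¹) (-F u / x u ^ 2) u :=
        (hDAt u huI).inv hxu.ne'
      have h2 : HasDerivAt (fun y => C * y) C u := by
        simpa using (hasDerivAt_id u).const_mul C
      have h3 := h1.neg.sub h2
      have he : -(-F u / x u ^ 2) - C = F u / x u ^ 2 - C := by ring
      rw [he] at h3
      exact h3
    have hφanti : AntitoneOn φ (Icc s t) := by
      apply antitoneOn_of_deriv_nonpos (convex_Icc s t)
      · apply ContinuousOn.sub
        · exact ((hX.mono hsub).inv₀ fun u hu => (hxpos u (hsub hu)).ne').neg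
        · exact (continuous_const.mul continuous_id).continuousOn
      · intro u hu
        rw [interior_Icc] at hu
        exact (hφderiv u hu).differentiableAt.differentiableWithinAt
      · intro u hu
        rw [interior_Icc] at hu
        rw [(hφderiv u hu).deriv]
        have huI : u ∈ Ico 0 Tstar := hsub ⟨hu.1.le, hu.2.le⟩
        have hxu : 0 < x u := hxpos u huI
        have hh0u : 0 ≤ hcum a x u :=
          hh0 u huI (fun v hv => hxpos v ⟨hv.1, lt_of_le_of_lt hv.2 huI.2⟩)
        have hb := vnlm_bound (M := M) hr hM0 hxu hkmin (kcap_ge (d := d) hk u) hh0u (hM u huI)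
        have hF1 : F u / x u ^ 2 ≤ |(-F u / x u ^ 2)| := by
          rw [neg_div, abs_neg]
          exact le_abs_self _
        have hF2 : |(-F u / x u ^ 2)| ≤ K * (x u)⁻¹ + K / kmin := by
          calc |(-F u / x u ^ 2)|
              = |(-((r - hcum a x u) * x u * (1 - x u / kcap kmin kmax d u)) / x u ^ 2)| := rfl
            _ ≤ (r + M + 1) * (x u)⁻¹ + (r + M + 1) / kmin := hb
            _ = K * (x u)⁻¹ + K / kmin := by rw [hKdef]
        have hF3 : K * (x u)⁻¹ + K / kmin ≤ C := by
          rw [hCdef]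
          have h4 : (x u)⁻¹ ≤ B := hinvB u huI
          have h5 : K / kmin = K * kmin⁻¹ := div_eq_mul_inv K kmin
          nlinarith
        linarith
    have h6 := hφanti ⟨le_refl s, hst⟩ ⟨hst, le_refl t⟩ hst
    simp only [hφdef] at h6
    have h7 : C * (t - s) = C * t - C * s := by ring
    linarith
  -- ### Step 5 : lower bound `x s ≥ (C (Tstar - s))⁻¹` from the blow-up of `x`.
  have claimE : ∀ s, 0 ≤ s → s < Tstar → (x s)⁻¹ ≤ C * (Tstar - s) := by
    intro s hs0 hsT
    refine le_of_forall_pos_le_add (fun ε hε => ?_)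
    have hlt : ((ε⁻¹ : ℝ) : EReal) <
        Filter.limsup (fun t => (x t : EReal)) (nhdsWithin Tstar (Iio Tstar)) := by
      rw [hblow]
      exact EReal.coe_lt_top _
    have hfreq : ∃ᶠ t in nhdsWithin Tstar (Iio Tstar), ((ε⁻¹ : ℝ) : EReal) < (x t : EReal) :=
      Filter.frequently_lt_of_lt_limsup (by isBoundedDefault) hlt
    have hIoo : Ioo s Tstar ∈ nhdsWithin Tstar (Iio Tstar) :=
      Ioo_mem_nhdsLT_of_mem ⟨hsT, le_refl Tstar⟩
    obtain ⟨t, hxt, htIoo⟩ :=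
      (hfreq.and_eventually (eventually_of_mem hIoo (fun u hu => hu))).exists
    have hxtR : ε⁻¹ < x t := by exact_mod_cast hxt
    have h1 : (x s)⁻¹ ≤ (x t)⁻¹ + C * (t - s) := claimD s t hs0 htIoo.1.le htIoo.2
    have h2 : (x t)⁻¹ < ε := aux_inv_lt hε hxtR
    have h3 : C * (t - s) ≤ C * (Tstar - s) := by
      apply mul_le_mul_of_nonneg_left _ hCpos.le
      linarith [htIoo.2]
    linarith
  -- ### Step 6 : the cumulative density then exceeds any bound : contradiction.
  have hHderiv : ∀ t ∈ Ioo 0 Tstar, HasDerivAt (hcum a x) (a * x t) t := by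
    intro t ht
    have hsub : uIcc 0 t ⊆ Ico 0 Tstar := by
      rw [uIcc_of_le ht.1.le]
      exact fun u hu => ⟨hu.1, lt_of_le_of_lt hu.2 ht.2⟩
    have hint : IntervalIntegrable x volume 0 t := (hX.mono hsub).intervalIntegrable
    have hmeas : StronglyMeasurableAtFilter x (nhds t) volume :=
      ContinuousOn.stronglyMeasurableAtFilter isOpen_Ioo (hX.mono Ioo_subset_Ico_self) t ht
    have hcont : ContinuousAt x t :=
      (hX.mono Ioo_subset_Ico_self).continuousAt
        (mem_nhds_iff.2 ⟨Ioo 0 Tstar, fun u hu => hu, isOpen_Ioo, ht⟩)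
    have h1 := intervalIntegral.integral_hasDerivAt_right hint hmeas hcont
    exact h1.const_mul a
  -- choose `τ` close enough to `Tstar`
  set E : ℝ := Tstar * Real.exp (-((M + 1) * C / a)) with hEdef
  have hE0 : 0 < E := by positivity
  have hElt : E < Tstar := by
    have h1 : Real.exp (-((M + 1) * C / a)) < 1 := by
      rw [Real.exp_lt_one_iff]
      have : 0 < (M + 1) * C / a := by positivity
      linarith
    nlinarith
  set τ : ℝ := Tstar - E with hτdef
  have hτ0 : 0 < τ := by rw [hτdef]; linarith
  have hτT : τ < Tstar := by rw [hτdef]; linarith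
  -- `ψ` is monotone on `[0, τ]`
  set ψ : ℝ → ℝ := fun t => hcum a x t + (a / C) * Real.log (Tstar - t) with hψdef
  have hψmono : MonotoneOn ψ (Icc 0 τ) := by
    have hψderiv : ∀ u ∈ Ioo 0 τ, HasDerivAt ψ (a * x u + (a / C) * (-1 / (Tstar - u))) u := by
      intro u hu
      have huI : u ∈ Ioo 0 Tstar := ⟨hu.1, lt_trans hu.2 hτT⟩
      have h1 := hHderiv u huI
      have h2 : HasDerivAt (fun y => Tstar - y) (-1) u := by
        simpa using (hasDerivAt_id u).const_sub Tstar
      have h3 : HasDerivAt (fun y => Real.log (Tstar - y)) (-1 / (Tstar - u)) u :=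
        h2.log (by linarith [huI.2] : Tstar - u ≠ 0)
      exact h1.add (h3.const_mul (a / C))
    apply monotoneOn_of_deriv_nonneg (convex_Icc 0 τ)
    · apply ContinuousOn.add
      · have hsub : Icc 0 τ ⊆ Ico 0 Tstar := fun u hu => ⟨hu.1, lt_of_le_of_lt hu.2 hτT⟩
        have hint : IntegrableOn x (uIcc 0 τ) volume := by
          rw [uIcc_of_le hτ0.le]
          exact (hX.mono hsub).integrableOn_Icc
        have h0 := intervalIntegral.continuousOn_primitive_interval hint
        rw [uIcc_of_le hτ0.le] at h0
        exact (continuousOn_const.mul h0 : ContinuousOn (hcum a x) (Icc 0 τ))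
      · apply ContinuousOn.mul continuousOn_const
        apply ContinuousOn.log
        · exact (continuous_const.sub continuous_id).continuousOn
        · intro u hu
          have h5 : u < Tstar := lt_of_le_of_lt hu.2 hτT
          intro hcontra
          nlinarith [h5]
    · intro u hu
      rw [interior_Icc] at hu
      exact (hψderiv u hu).differentiableAt.differentiableWithinAt
    · intro u hu
      rw [interior_Icc] at hu
      rw [(hψderiv u hu).deriv]
      have huI : u ∈ Ioo 0 Tstar := ⟨hu.1, lt_trans hu.2 hτT⟩
      have hTu : 0 < Tstar - u := by linarith [huI.2]
      have h1 : (x u)⁻¹ ≤ C * (Tstar - u) := claimE u huI.1.le huI.2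
      have h2 : (C * (Tstar - u))⁻¹ ≤ x u :=
        aux_inv_le (hxpos u ⟨huI.1.le, huI.2⟩) (by positivity) h1
      have h3 : a * (C * (Tstar - u))⁻¹ + (a / C) * (-1 / (Tstar - u)) = 0 := by
        field_simp
        ring
      have h4 : a * (C * (Tstar - u))⁻¹ ≤ a * x u := by
        apply mul_le_mul_of_nonneg_left h2 ha.le
      linarith
  -- evaluate at `0` and `τ`
  have hψ0 : ψ 0 = (a / C) * Real.log Tstar := by
    simp only [hψdef, hcum, intervalIntegral.integral_same, mul_zero, sub_zero, zero_add]
  have hτmem : τ ∈ Icc (0:ℝ) τ := ⟨hτ0.le, le_refl τ⟩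
  have h0mem : (0:ℝ) ∈ Icc (0:ℝ) τ := ⟨le_refl 0, hτ0.le⟩
  have hmono := hψmono h0mem hτmem hτ0.le
  rw [hψ0] at hmono
  have hTsubτ : Tstar - τ = E := by simp [hτdef]
  have hlogE : Real.log E = Real.log Tstar - (M + 1) * C / a := by
    rw [hEdef, Real.log_mul (ne_of_gt hTpos) (Real.exp_ne_zero _), Real.log_exp]
    ring
  have hψτ : ψ τ = hcum a x τ + (a / C) * (Real.log Tstar - (M + 1) * C / a) := by
    simp only [hψdef]
    rw [hTsubτ, hlogE]
  rw [hψτ] at hmono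
  have hfinal : M + 1 ≤ hcum a x τ := by
    have hac : (a / C) * ((M + 1) * C / a) = M + 1 := by
      field_simp
    have h6 : (a / C) * (Real.log Tstar - (M + 1) * C / a)
        = (a / C) * Real.log Tstar - (M + 1) := by
      rw [mul_sub, hac]
    linarith [hmono, h6]
  have := hM τ ⟨hτ0.le, hτT⟩
  linarith
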